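/- arXiv:1101.5140 — 2 statements merged into one kernel-verified Lean document; each statement's English description precedes it below -/
import Mathlib

section
/- If X is a reduced set of points in the projective plane whose homogeneous ideal I(X) has Castelnuovo–Mumford regularity r+1, then the ideal I(2X) of the double point scheme 2X (the saturation of I(X)^2) has regularity at most 2r+2, i.e. reg(I(2X)) ≤ 2·reg(I(X)). -/
open MvPolynomial

/-- Hilbert function of `R/I` in degree `t`, where `R = k[x,y,z]` with its
standard grading: the `k`-dimension of the degree-`t` part of the quotient. -/
noncomputable def hilbertFn {k : Type} [Field k]
    (I : Ideal (MvPolynomial (Fin 3) k)) (t : ℕ) : ℕ :=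
  Module.finrank k
    ((MvPolynomial.homogeneousSubmodule (Fin 3) k t) ⧸
      (Submodule.comap (MvPolynomial.homogeneousSubmodule (Fin 3) k t).subtype
        (Submodule.restrictScalars k I)))

/-- The saturated homogeneous ideal of the point of `ℙ²` with homogeneous
coordinates `p`: generated by the linear forms vanishing at `p`. -/
noncomputable def pointIdeal {k : Type} [Field k] (p : Fin 3 → k) : Ideal (MvPolynomial (Fin 3) k) :=
  Ideal.span {f | f ∈ MvPolynomial.homogeneousSubmodule (Fin 3) k 1 ∧ MvPolynomial.eval p f = 0}

open Finsupp

section Aux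

variable {k : Type} [Field k]


lemma deg_sum (u : Fin 3 →₀ ℕ) : u.degree = ∑ j : Fin 3, u j := by
  rw [Finsupp.degree]
  exact Finset.sum_subset (Finset.subset_univ _) (by simp [Finsupp.notMem_support_iff])

lemma isHom_coeff {F : MvPolynomial (Fin 3) k} {t : ℕ} (h : F.IsHomogeneous t)
    {u : Fin 3 →₀ ℕ} (hu : coeff u F ≠ 0) : u.degree = t := by
  rw [Finsupp.degree_eq_weight_one]; exact h hu

lemma Lscale {t : ℕ} {F : MvPolynomial (Fin 3) k} (h : F.IsHomogeneous t)
    {A : Type} [CommSemiring A] [Algebra k A] (a : A) (v : Fin 3 → k) :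
    aeval (fun j => algebraMap k A (v j) * a) F = algebraMap k A (eval v F) * a ^ t := by
  conv_lhs => rw [as_sum F]
  conv_rhs => rw [as_sum F]
  rw [map_sum, map_sum, map_sum, Finset.sum_mul]
  apply Finset.sum_congr rfl
  intro u hu
  rw [aeval_monomial, eval_monomial, map_mul]
  have hdeg : u.degree = t := isHom_coeff h (by simpa using hu)
  have h1 : (u.prod fun n e => (algebraMap k A (v n) * a) ^ e)
      = (u.prod fun n e => (algebraMap k A (v n)) ^ e) * (u.prod fun _ e => a ^ e) := by
    rw [Finsupp.prod, Finsupp.prod, Finsupp.prod, ← Finset.prod_mul_distrib]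
    exact Finset.prod_congr rfl (fun i _ => mul_pow _ _ _)
  have h2 : (u.prod fun _ e => a ^ e) = a ^ t := by
    rw [Finsupp.prod, Finset.prod_pow_eq_pow_sum, ← hdeg, Finsupp.degree]
    rfl
  have h3 : algebraMap k A (u.prod fun n e => (v n) ^ e)
      = u.prod fun n e => (algebraMap k A (v n)) ^ e := by
    rw [Finsupp.prod, Finsupp.prod, map_prod]
    simp [map_pow]
  rw [h1, h2, h3, mul_assoc]

lemma isHom_pderiv {F : MvPolynomial (Fin 3) k} {t : ℕ} (h : F.IsHomogeneous t) (j : Fin 3) :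
    (pderiv j F).IsHomogeneous (t - 1) := by
  conv => rw [as_sum F]
  rw [map_sum]
  apply MvPolynomial.IsHomogeneous.sum
  intro u hu
  rw [pderiv_monomial]
  rcases Nat.eq_zero_or_pos (u j) with h0 | h0
  · rw [h0]; simp [isHomogeneous_zero]
  · apply isHomogeneous_monomial
    have hdeg : u.degree = t := isHom_coeff h (by simpa using hu)
    rw [deg_sum] at hdeg ⊢
    simp only [Finsupp.tsub_apply]
    fin_cases j <;> simp_all [Fin.sum_univ_three, Finsupp.single_apply] <;> omega

lemma euler {F : MvPolynomial (Fin 3) k} {t : ℕ} (h : F.IsHomogeneous t) :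
    ∑ j : Fin 3, X j * pderiv j F = C (t : k) * F := by
  have key : ∀ u ∈ F.support, ∑ j : Fin 3, X j * pderiv j (monomial u (coeff u F))
      = C (t : k) * monomial u (coeff u F) := by
    intro u hu
    have hdeg : u.degree = t := isHom_coeff h (by simpa using hu)
    have step : ∀ j : Fin 3, X j * pderiv j (monomial u (coeff u F))
        = monomial u (coeff u F * (u j : k)) := by
      intro j
      rw [pderiv_monomial]
      rcases Nat.eq_zero_or_pos (u j) with h0 | h0
      · rw [h0]; simp
      · rw [X, monomial_mul, one_mul]
        have huj : Finsupp.single j 1 + (u - Finsupp.single j 1) = u := by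
          ext i
          simp only [Finsupp.add_apply, Finsupp.tsub_apply, Finsupp.single_apply]
          rcases eq_or_ne j i with rfl | hne
          · simp; omega
          · simp [hne, hne.symm]
        rw [huj]
    rw [Finset.sum_congr rfl (fun j _ => step j), ← map_sum, C_mul_monomial]
    rw [← Finset.mul_sum, ← Nat.cast_sum, ← deg_sum, hdeg, mul_comm]
  conv_lhs => rw [as_sum F]
  simp only [map_sum, Finset.mul_sum]
  rw [Finset.sum_comm]
  conv_rhs => rw [as_sum F, Finset.mul_sum]
  exact Finset.sum_congr rfl key



lemma umem (q : Fin 3 → k) {m : Fin 3} (hm : q m ≠ 0) (j : Fin 3) :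
    X j - C (q j / q m) * X m ∈ pointIdeal q := by
  apply Ideal.subset_span
  constructor
  · rw [mem_homogeneousSubmodule]
    exact ((isHomogeneous_X k j).sub ((isHomogeneous_C_mul_X _ m)))
  · simp [div_mul_cancel₀ _ hm]

lemma subident (q : Fin 3 → k) {m : Fin 3} (hm : q m ≠ 0) (F : MvPolynomial (Fin 3) k) :
    F - aeval (fun j => C (q j / q m) * X m) F
      - ∑ j : Fin 3, aeval (fun j => C (q j / q m) * X m) (pderiv j F)
          * (X j - C (q j / q m) * X m) ∈ (pointIdeal q)^2 := by
  set ψ : MvPolynomial (Fin 3) k →ₐ[k] MvPolynomial (Fin 3) k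
    := aeval (fun j => C (q j / q m) * X m) with hψ
  set u : Fin 3 → MvPolynomial (Fin 3) k := fun j => X j - C (q j / q m) * X m with hu
  set I2 := (pointIdeal q)^2 with hI2
  induction F using MvPolynomial.induction_on with
  | C a => simpa using I2.zero_mem
  | add p p' hp hp' =>
      have : (p + p') - ψ (p + p') - ∑ j : Fin 3, ψ (pderiv j (p + p')) * u j
          = (p - ψ p - ∑ j : Fin 3, ψ (pderiv j p) * u j)
            + (p' - ψ p' - ∑ j : Fin 3, ψ (pderiv j p') * u j) := by
        simp only [map_add, Finset.sum_add_distrib, add_mul]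
        ring
      rw [this]; exact I2.add_mem hp hp'
  | mul_X p j hp =>
      have key : (p * X j) - ψ (p * X j) - ∑ i : Fin 3, ψ (pderiv i (p * X j)) * u i
          = (p - ψ p - ∑ i : Fin 3, ψ (pderiv i p) * u i) * u j
            + (∑ i : Fin 3, ψ (pderiv i p) * (u i * u j))
            + (C (q j / q m) * X m) * (p - ψ p - ∑ i : Fin 3, ψ (pderiv i p) * u i) := by
        have hXj : ψ (X j) = C (q j / q m) * X m := by rw [hψ]; simp
        have hpd : ∀ i : Fin 3, pderiv i (p * X j)
            = pderiv i p * X j + p * pderiv i (X j) := fun i => pderiv_mul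
        simp only [map_mul, hpd, map_add, add_mul, Finset.sum_add_distrib, hXj]
        have hXju : X j = u j + C (q j / q m) * X m := by rw [hu]; ring
        have hpdX : ∀ i : Fin 3, ψ (pderiv i (X j)) = if i = j then 1 else 0 := by
          intro i
          rcases eq_or_ne i j with rfl | h
          · simp
          · rw [pderiv_X_of_ne h.symm, if_neg h, map_zero]
        simp only [map_mul, hpd, map_add, add_mul, Finset.sum_add_distrib, hXj, hpdX,
          mul_ite, ite_mul, mul_one, mul_zero, one_mul, zero_mul,
          Finset.sum_ite_eq', Finset.mem_univ, if_true]
        simp only [hu, Fin.sum_univ_three]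
        ring
      rw [key]
      refine I2.add_mem (I2.add_mem (I2.mul_mem_right _ hp) ?_) (I2.mul_mem_left _ hp)
      apply Ideal.sum_mem
      intro i _
      apply I2.mul_mem_left
      rw [hI2, pow_two]
      exact Ideal.mul_mem_mul (umem q hm i) (umem q hm j)







lemma aeval_id (v : Fin 3 → k) (f : MvPolynomial (Fin 3) k) : aeval v f = eval v f := by
  rw [← coe_aeval_eq_eval]; rfl

lemma eval_zero_of_mem {q : Fin 3 → k} {F : MvPolynomial (Fin 3) k}
    (h : F ∈ pointIdeal q) : eval q F = 0 := by
  have : pointIdeal q ≤ RingHom.ker (eval q) := by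
    rw [pointIdeal, Ideal.span_le]
    rintro f ⟨-, hf⟩
    exact hf
  exact this h

lemma jet_zero_of_mem_sq {q : Fin 3 → k} {F : MvPolynomial (Fin 3) k}
    (h : F ∈ (pointIdeal q)^2) :
    eval q F = 0 ∧ ∀ j, eval q (pderiv j F) = 0 := by
  rw [pow_two] at h
  refine Submodule.mul_induction_on h ?_ ?_
  · intro a ha b hb
    have ha' := eval_zero_of_mem ha
    have hb' := eval_zero_of_mem hb
    refine ⟨by simp [ha', hb'], fun j => ?_⟩
    rw [pderiv_mul]
    simp [ha', hb']
  · rintro x y ⟨hx1, hx2⟩ ⟨hy1, hy2⟩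
    refine ⟨by simp [hx1, hy1], fun j => ?_⟩
    rw [map_add]
    simp [hx2 j, hy2 j]

-- scaled evaluation vanishing
lemma eval_div_zero {q : Fin 3 → k} {m : Fin 3} (hm : q m ≠ 0) {t : ℕ}
    {F : MvPolynomial (Fin 3) k} (hF : F.IsHomogeneous t) (h0 : eval q F = 0) :
    eval (fun j => q j / q m) F = 0 := by
  have := Lscale hF (A := k) (q m)⁻¹ q
  simp only [Algebra.algebraMap_self_apply] at this
  rw [← aeval_id]
  calc aeval (fun j => q j / q m) F = aeval (fun j => q j * (q m)⁻¹) F := by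
        simp [div_eq_mul_inv]
    _ = 0 := by rw [this, h0, zero_mul]

lemma psi_eq {q : Fin 3 → k} {m : Fin 3} {t : ℕ}
    {F : MvPolynomial (Fin 3) k} (hF : F.IsHomogeneous t) :
    aeval (fun j => C (q j / q m) * X m) F
      = C (eval (fun j => q j / q m) F) * (X m) ^ t := by
  have := Lscale hF (A := MvPolynomial (Fin 3) k) (X m) (fun j => q j / q m)
  rw [← algebraMap_eq]
  exact this

lemma mem_pointIdeal_of {q : Fin 3 → k} (hq : q ≠ 0) {t : ℕ}
    {F : MvPolynomial (Fin 3) k} (hF : F.IsHomogeneous t) (h0 : eval q F = 0) :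
    F ∈ pointIdeal q := by
  obtain ⟨m, hm⟩ : ∃ m, q m ≠ 0 := by
    by_contra h; push_neg at h; exact hq (funext h)
  have hsub := subident q hm F
  have hpsi : aeval (fun j => C (q j / q m) * X m) F = 0 := by
    rw [psi_eq hF, eval_div_zero hm hF h0, map_zero, zero_mul]
  have : F = (F - aeval (fun j => C (q j / q m) * X m) F
      - ∑ j : Fin 3, aeval (fun j => C (q j / q m) * X m) (pderiv j F)
          * (X j - C (q j / q m) * X m))
      + ∑ j : Fin 3, aeval (fun j => C (q j / q m) * X m) (pderiv j F)
          * (X j - C (q j / q m) * X m) := by rw [hpsi]; ring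
  rw [this]
  refine Ideal.add_mem _ (Ideal.pow_le_self two_ne_zero hsub) ?_
  exact Ideal.sum_mem _ fun j _ => Ideal.mul_mem_left _ _ (umem q hm j)

lemma mem_sq_of {q : Fin 3 → k} (hq : q ≠ 0) {t : ℕ}
    {F : MvPolynomial (Fin 3) k} (hF : F.IsHomogeneous t) (h0 : eval q F = 0)
    (h1 : ∀ j, eval q (pderiv j F) = 0) :
    F ∈ (pointIdeal q)^2 := by
  obtain ⟨m, hm⟩ : ∃ m, q m ≠ 0 := by
    by_contra h; push_neg at h; exact hq (funext h)
  have hsub := subident q hm F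
  have hpsi : aeval (fun j => C (q j / q m) * X m) F = 0 := by
    rw [psi_eq hF, eval_div_zero hm hF h0, map_zero, zero_mul]
  have hpsid : ∀ j : Fin 3, aeval (fun j => C (q j / q m) * X m) (pderiv j F) = 0 := by
    intro j
    rw [psi_eq (isHom_pderiv hF j), eval_div_zero hm (isHom_pderiv hF j) (h1 j),
      map_zero, zero_mul]
  have : F = F - aeval (fun j => C (q j / q m) * X m) F
      - ∑ j : Fin 3, aeval (fun j => C (q j / q m) * X m) (pderiv j F)
          * (X j - C (q j / q m) * X m) := by
    rw [hpsi]
    rw [Finset.sum_congr rfl (fun j _ => by rw [hpsid j, zero_mul])]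
    simp
  rw [this]
  exact hsub


noncomputable def jetL (q : Fin 3 → k) :
    MvPolynomial (Fin 3) k →ₗ[k] k × (Fin 3 → k) :=
  LinearMap.prod (aeval q).toLinearMap
    (LinearMap.pi fun j => (aeval q).toLinearMap ∘ₗ (pderiv j).toLinearMap)

lemma jetL_apply (q : Fin 3 → k) (F : MvPolynomial (Fin 3) k) :
    jetL q F = (eval q F, fun j => eval q (pderiv j F)) := by
  have h : ∀ G : MvPolynomial (Fin 3) k, aeval q G = eval q G := fun G => by
    rw [← coe_aeval_eq_eval]; rfl
  simp [jetL, LinearMap.prod_apply, h]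
  rfl

noncomputable def euf (q : Fin 3 → k) (t : ℕ) : (k × (Fin 3 → k)) →ₗ[k] k where
  toFun w := (∑ j, w.2 j * q j) - (t : k) * w.1
  map_add' x y := by simp [add_mul, Finset.sum_add_distrib, mul_add]; ring
  map_smul' c x := by simp [Finset.mul_sum, mul_assoc, mul_sub]; ring

lemma finrank_euf_ker {q : Fin 3 → k} (hq : q ≠ 0) (t : ℕ) :
    Module.finrank k (LinearMap.ker (euf q t)) = 3 := by
  obtain ⟨j0, hj0⟩ : ∃ m, q m ≠ 0 := by
    by_contra h; push_neg at h; exact hq (funext h)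
  have hsurj : Function.Surjective (euf q t) := by
    intro c
    refine ⟨(0, fun j => if j = j0 then c / q j0 else 0), ?_⟩
    simp only [euf, LinearMap.coe_mk, AddHom.coe_mk, ite_mul, zero_mul, mul_zero]
    rw [Finset.sum_ite_eq' Finset.univ j0 (fun j => c / q j0 * q j)]
    simp [div_mul_cancel₀ _ hj0]
  have h1 := LinearMap.finrank_range_add_finrank_ker (euf q t)
  rw [LinearMap.range_eq_top.mpr hsurj] at h1
  have h2 : Module.finrank k (k × (Fin 3 → k)) = 4 := by
    rw [Module.finrank_prod, Module.finrank_self, Module.finrank_pi]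
    simp
  simp only [finrank_top] at h1
  rw [Module.finrank_self, h2] at h1
  omega

noncomputable def piSubEquiv {V : Type} [AddCommGroup V] [Module k V] {ι : Type}
    (W : ι → Submodule k V) :
    (Submodule.pi Set.univ W) ≃ₗ[k] Π i, W i where
  toFun x i := ⟨x.1 i, x.2 i (Set.mem_univ i)⟩
  invFun f := ⟨fun i => f i, fun i _ => (f i).2⟩
  map_add' x y := rfl
  map_smul' c x := rfl
  left_inv x := rfl
  right_inv f := rfl

lemma finrank_pi_univ {V : Type} [AddCommGroup V] [Module k V] [FiniteDimensional k V]
    {n : ℕ} (W : Fin n → Submodule k V) :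
    Module.finrank k (Submodule.pi Set.univ W) = ∑ i, Module.finrank k (W i) := by
  rw [(piSubEquiv W).finrank_eq, Module.finrank_pi_fintype]









-- generic: hilbertFn as rank of a jet-type map
lemma hilbert_rank (J : Ideal (MvPolynomial (Fin 3) k)) (t : ℕ)
    {M : Type} [AddCommGroup M] [Module k M]
    (Φ : (homogeneousSubmodule (Fin 3) k t) →ₗ[k] M)
    (h : ∀ F : homogeneousSubmodule (Fin 3) k t, Φ F = 0 ↔ (F : MvPolynomial (Fin 3) k) ∈ J) :
    hilbertFn J t = Module.finrank k (LinearMap.range Φ) := by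
  have hker : Submodule.comap (homogeneousSubmodule (Fin 3) k t).subtype
      (Submodule.restrictScalars k J) = LinearMap.ker Φ := by
    ext F
    simp only [Submodule.mem_comap, Submodule.restrictScalars_mem, LinearMap.mem_ker, h F]
    rfl
  rw [hilbertFn, hker]
  exact (LinearMap.quotKerEquivRange Φ).finrank_eq

-- evaluated Euler
lemma euler_eval {F : MvPolynomial (Fin 3) k} {t : ℕ} (h : F.IsHomogeneous t) (q : Fin 3 → k) :
    ∑ j, eval q (pderiv j F) * q j = (t : k) * eval q F := by
  have := congrArg (eval q) (euler h)
  simp only [map_sum, eval_mul, eval_X, eval_C] at this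
  rw [← this]
  exact Finset.sum_congr rfl fun j _ => mul_comm _ _

end Aux

/-- If `X` is a reduced set of `n` points of `ℙ²` whose ideal has
Castelnuovo–Mumford regularity `r+1` (equivalently, for points: the Hilbert
function of `X` equals `n` exactly from degree `r` on), then `I(2X)` has
regularity at most `2r+2` (equivalently, the Hilbert function of the double
point scheme `2X` equals its degree `3n` from degree `2r+1` on). -/
theorem stmt0 {k : Type} [Field k] [IsAlgClosed k] (n : ℕ)
    (s : Fin n → (Fin 3 → k))
    (hne : ∀ i, s i ≠ 0)
    (hdist : ∀ i j, i ≠ j → ∀ c : k, c • s j ≠ s i)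
    (r : ℕ)
    (hreg : ∀ t, r ≤ t → hilbertFn (⨅ i, pointIdeal (s i)) t = n)
    (hmin : r = 0 ∨ hilbertFn (⨅ i, pointIdeal (s i)) (r - 1) ≠ n) :
    ∀ t, 2 * r + 1 ≤ t → hilbertFn (⨅ i, (pointIdeal (s i)) ^ 2) t = 3 * n := by
  intro t ht
  classical
  -- separators from degree r
  set ev : (homogeneousSubmodule (Fin 3) k r) →ₗ[k] (Fin n → k) :=
    LinearMap.pi (fun i => (aeval (s i)).toLinearMap ∘ₗ
      (homogeneousSubmodule (Fin 3) k r).subtype) with hev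
  have hev_apply : ∀ (F : homogeneousSubmodule (Fin 3) k r) (i : Fin n),
      ev F i = eval (s i) (F : MvPolynomial (Fin 3) k) := by
    intro F i
    simp only [hev, LinearMap.pi_apply, LinearMap.comp_apply, Submodule.coe_subtype,
      AlgHom.toLinearMap_apply]
    rw [← coe_aeval_eq_eval]; rfl
  have hev_rank : hilbertFn (⨅ i, pointIdeal (s i)) r
      = Module.finrank k (LinearMap.range ev) := by
    apply hilbert_rank
    intro F
    rw [_root_.funext_iff]
    constructor
    · intro h
      rw [Ideal.mem_iInf]
      intro i
      exact mem_pointIdeal_of (hne i) ((mem_homogeneousSubmodule _ _).mp F.2)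
        (by have := h i; rwa [hev_apply] at this)
    · intro h i
      rw [hev_apply]
      exact eval_zero_of_mem (Ideal.mem_iInf.mp h i)
  have hev_surj : LinearMap.range ev = ⊤ := by
    apply Submodule.eq_top_of_finrank_eq
    rw [← hev_rank, hreg r le_rfl, Module.finrank_pi]
    simp
  -- pick separators
  have hsep : ∀ i : Fin n, ∃ F : MvPolynomial (Fin 3) k, F.IsHomogeneous r ∧
      (∀ i', eval (s i') F = if i' = i then 1 else 0) := by
    intro i
    obtain ⟨F, hF⟩ : ∃ F, ev F = Pi.single i 1 := by
      have : (Pi.single i 1 : Fin n → k) ∈ LinearMap.range ev := by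
        rw [hev_surj]; trivial
      exact this
    refine ⟨F, (mem_homogeneousSubmodule _ _).mp F.2, fun i' => ?_⟩
    rw [← hev_apply, hF, Pi.single_apply]
  -- the jet map in degree t
  set Φ : (homogeneousSubmodule (Fin 3) k t) →ₗ[k] (Fin n → k × (Fin 3 → k)) :=
    LinearMap.pi (fun i => (jetL (s i)) ∘ₗ (homogeneousSubmodule (Fin 3) k t).subtype) with hΦ
  have hΦ_apply : ∀ (F : homogeneousSubmodule (Fin 3) k t) (i : Fin n),
      Φ F i = (eval (s i) (F : MvPolynomial (Fin 3) k),
        fun j => eval (s i) (pderiv j (F : MvPolynomial (Fin 3) k))) := by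
    intro F i
    simp only [hΦ, LinearMap.pi_apply, LinearMap.comp_apply, Submodule.coe_subtype]
    exact jetL_apply _ _
  have hrank : hilbertFn (⨅ i, (pointIdeal (s i))^2) t
      = Module.finrank k (LinearMap.range Φ) := by
    apply hilbert_rank
    intro F
    rw [_root_.funext_iff]
    constructor
    · intro h
      rw [Ideal.mem_iInf]
      intro i
      have hi := h i
      rw [hΦ_apply, Prod.ext_iff, _root_.funext_iff] at hi
      exact mem_sq_of (hne i) ((mem_homogeneousSubmodule _ _).mp F.2) hi.1
        (by intro j; simpa using hi.2 j)
    · intro h i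
      rw [hΦ_apply]
      have := jet_zero_of_mem_sq (Ideal.mem_iInf.mp h i)
      rw [Prod.ext_iff]
      exact ⟨this.1, funext this.2⟩
  -- W blocks
  set W : Fin n → Submodule k (k × (Fin 3 → k)) := fun i => LinearMap.ker (euf (s i) t)
    with hW
  have hrange : LinearMap.range Φ = Submodule.pi Set.univ W := by
    apply le_antisymm
    · rintro y ⟨F, rfl⟩
      rw [Submodule.mem_pi]
      intro i _
      rw [hW, LinearMap.mem_ker]
      have hhom : (F : MvPolynomial (Fin 3) k).IsHomogeneous t :=
        (mem_homogeneousSubmodule _ _).mp F.2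
      simp only [euf, hΦ_apply, LinearMap.coe_mk, AddHom.coe_mk]
      rw [euler_eval hhom (s i)]
      ring
    · intro x hx
      have hxsum : x = ∑ i, Pi.single i (x i) := by
        rw [Finset.univ_sum_single]
      rw [hxsum]
      apply Submodule.sum_mem
      intro i _
      obtain ⟨F, hFhom, hFeval⟩ := hsep i
      set q := s i with hq
      obtain ⟨j0, hj0⟩ : ∃ m, q m ≠ 0 := by
        by_contra hcon; push_neg at hcon; exact (hne i) (funext hcon)
      set M : MvPolynomial (Fin 3) k := C (q j0)⁻¹ * X j0 with hM
      have hMhom : M.IsHomogeneous 1 := isHomogeneous_C_mul_X _ _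
      have hM1 : eval q M = 1 := by simp [hM, inv_mul_cancel₀ hj0]
      set e := t - (2 * r + 1) with he
      set d : Fin 3 → k := fun j =>
        2 * eval q (pderiv j F) + e * eval q (pderiv j M) with hd
      have hdq : ∑ j, d j * q j = (t : k) - 1 := by
        have h1 : ∑ j, eval q (pderiv j F) * q j = (r : k) := by
          rw [euler_eval hFhom q, hFeval i, if_pos rfl, mul_one]
        have h2 : ∑ j, eval q (pderiv j M) * q j = (1 : k) := by
          rw [euler_eval hMhom q, hM1]; norm_num
        have expand : ∑ j, d j * q j
            = 2 * (∑ j, eval q (pderiv j F) * q j)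
              + e * (∑ j, eval q (pderiv j M) * q j) := by
          rw [Finset.mul_sum, Finset.mul_sum, ← Finset.sum_add_distrib]
          refine Finset.sum_congr rfl fun j _ => ?_
          rw [hd]; ring
        have hcast : (2 : k) * (r : k) + (e : k) * 1 = ((2 * r + e : ℕ) : k) := by
          push_cast; ring
        have hnat : 2 * r + e = t - 1 := by omega
        rw [expand, h1, h2, hcast, hnat, Nat.cast_sub (by omega : 1 ≤ t), Nat.cast_one]
      -- the linear-form family
      have hsum_eval : ∀ (c : Fin 3 → k) (p : Fin 3 → k),
          eval p (∑ j : Fin 3, C (c j) * X j) = ∑ j, c j * p j := by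
        intro c p
        rw [map_sum]
        exact Finset.sum_congr rfl fun j _ => by rw [eval_mul, eval_C, eval_X]
      have hsum_pd : ∀ (c : Fin 3 → k) (jj : Fin 3),
          pderiv jj (∑ j : Fin 3, C (c j) * X j) = C (c jj) := by
        intro c jj
        rw [map_sum]
        have hterm : ∀ j : Fin 3, pderiv jj (C (c j) * X j)
            = if j = jj then C (c j) else 0 := by
          intro j
          rw [pderiv_C_mul]
          rcases eq_or_ne j jj with rfl | h
          · simp
          · rw [pderiv_X_of_ne h, mul_zero, if_neg h]
        rw [Finset.sum_congr rfl fun j _ => hterm j,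
          Finset.sum_ite_eq' Finset.univ jj (fun j => C (c j)), if_pos (Finset.mem_univ jj)]
      set G : (Fin 3 → k) → MvPolynomial (Fin 3) k :=
        fun c => F^2 * M^e * (∑ j : Fin 3, C (c j) * X j) with hG
      have hGhom : ∀ c, (G c).IsHomogeneous t := by
        intro c
        have h3 : (∑ j : Fin 3, C (c j) * X j).IsHomogeneous 1 :=
          MvPolynomial.IsHomogeneous.sum _ _ _ (fun j _ => isHomogeneous_C_mul_X _ _)
        have := ((hFhom.pow 2).mul (hMhom.pow e)).mul h3
        have harith : (r * 2 + 1 * e) + 1 = t := by omega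
        exact harith ▸ this
      have hjet_other : ∀ (c : Fin 3 → k) (i' : Fin n), i' ≠ i →
          eval (s i') (G c) = 0 ∧ ∀ j, eval (s i') (pderiv j (G c)) = 0 := by
        intro c i' hii'
        have h0 : eval (s i') F = 0 := by rw [hFeval i', if_neg hii']
        constructor
        · simp [hG, h0]
        · intro j
          simp [hG, pderiv_mul, pderiv_pow, h0]
      have hjet_self : ∀ (c : Fin 3 → k),
          eval q (G c) = ∑ j, c j * q j ∧
          ∀ j, eval q (pderiv j (G c)) = c j + (∑ jj, c jj * q jj) * d j := by
        intro c
        have hFq : eval q F = 1 := by rw [hFeval i, if_pos rfl]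
        constructor
        · simp [hG, hFq, hM1, hsum_eval]
        · intro j
          rw [hG]
          simp only [pderiv_mul, pderiv_pow, hsum_pd, map_add, eval_mul, eval_pow,
            eval_add, hFq, hM1, eval_C, map_natCast, hsum_eval]
          rw [hd]
          ring
      -- solve for c
      have hxW : x i ∈ W i := hx i (Set.mem_univ i)
      rw [hW, LinearMap.mem_ker] at hxW
      have hxW' : (∑ j, (x i).2 j * q j) - (t : k) * (x i).1 = 0 := hxW
      set a := (x i).1 with ha
      set b := (x i).2 with hb
      set c : Fin 3 → k := fun j => b j - a * d j with hc
      have hcq : ∑ j, c j * q j = a := by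
        have : ∑ j, c j * q j = (∑ j, b j * q j) - a * (∑ j, d j * q j) := by
          rw [Finset.mul_sum, ← Finset.sum_sub_distrib]
          refine Finset.sum_congr rfl fun j _ => ?_
          rw [hc]; ring
        rw [this, hdq]
        have hbq : ∑ j, b j * q j = (t : k) * a := by linear_combination hxW'
        rw [hbq]; ring
      refine ⟨⟨G c, (mem_homogeneousSubmodule _ _).mpr (hGhom c)⟩, ?_⟩
      funext i'
      rcases eq_or_ne i' i with rfl | hii'
      · rw [hΦ_apply, Pi.single_eq_same]
        have hv := (hjet_self c).1
        have hg := (hjet_self c).2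
        have hxab : x i' = (a, b) := rfl
        rw [hxab]
        show ((eval q) (G c), fun j => (eval q) ((pderiv j) (G c))) = (a, b)
        rw [Prod.mk.injEq]
        refine ⟨by rw [hv, hcq], funext fun j => ?_⟩
        rw [hg j, hcq, hc]
        ring
      · rw [hΦ_apply, Pi.single_eq_of_ne hii']
        have h2 := hjet_other c i' hii'
        show ((eval (s i')) (G c), fun j => (eval (s i')) ((pderiv j) (G c)))
          = (0, fun _ => 0)
        rw [Prod.mk.injEq]
        exact ⟨by simpa using h2.1, funext fun j => by simpa using h2.2 j⟩
  -- count
  rw [hrank, hrange, finrank_pi_univ]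
  have hWrank : ∀ i : Fin n, Module.finrank k (W i) = 3 := fun i => finrank_euf_ker (hne i) t
  rw [Finset.sum_congr rfl fun i _ => hWrank i, Finset.sum_const, smul_eq_mul,
    Finset.card_univ, Fintype.card_fin, mul_comm]
end

section
/- Let C be a reduced irreducible plane cubic defined by an irreducible form F of degree 3, and let X be a reduced set of n = 3t points on C with t ≥ 3 whose Hilbert function has first difference (1,2,3,3,…,3,2,1) (value 3 in degrees 2 through t−1, then 2, then 1). Then X is a complete intersection: I(X) = (F, G) for some form G of degree t. -/
open MvPolynomial

attribute [local instance] MvPolynomial.gradedAlgebra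

namespace Stmt7Aux

open Finset


/-- lattice points (a,b) with a+b ≤ d -/
def Tfin (d : ℕ) : Finset (ℕ × ℕ) :=
  (range (d+1) ×ˢ range (d+1)).filter (fun p => p.1 + p.2 ≤ d)

lemma Tfin_card (d : ℕ) : 2 * (Tfin d).card = (d+1)*(d+2) := by
  have hcard : (Tfin d).card = ∑ a ∈ range (d+1), (d + 1 - a) := by
    rw [Finset.card_eq_sum_card_fiberwise (f := Prod.fst) (t := range (d+1))
      (fun x hx => by simp [Tfin, Finset.mem_filter, Finset.mem_product] at hx ⊢; omega)]
    refine Finset.sum_congr rfl fun a ha => ?_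
    rw [Finset.mem_range] at ha
    have : Finset.filter (fun x => x.1 = a) (Tfin d)
        = (range (d+1-a)).image (fun b => (a, b)) := by
      ext ⟨x, y⟩
      simp only [Tfin, Finset.mem_filter, Finset.mem_product, Finset.mem_range,
        Finset.mem_image]
      constructor
      · rintro ⟨⟨⟨h1, h2⟩, h3⟩, rfl⟩
        refine ⟨y, ?_, rfl⟩
        omega
      · rintro ⟨b, hb, h⟩
        obtain ⟨rfl, rfl⟩ := Prod.mk.injEq .. ▸ h
        omega
    rw [this, Finset.card_image_of_injective _ (fun b c h => by simpa using h),
      Finset.card_range]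
  have h2 : ∑ a ∈ range (d+1), (d + 1 - a) = (∑ a ∈ range (d+1), a) + (d+1) := by
    rw [← Finset.sum_range_reflect]
    have : ∀ a ∈ range (d+1), d + 1 - (d + 1 - 1 - a) = a + 1 := by
      intro a ha; rw [Finset.mem_range] at ha; omega
    rw [Finset.sum_congr rfl this, Finset.sum_add_distrib]
    simp
  have h3 := Finset.sum_range_id_mul_two (d+1)
  simp only [Nat.add_sub_cancel] at h3
  rw [hcard, h2]
  ring_nf
  ring_nf at h3
  omega

lemma degree_eq_sum (m : Fin 3 →₀ ℕ) : m.degree = m 0 + m 1 + m 2 := by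
  have : m.degree = ∑ i : Fin 3, m i := by
    rw [Finsupp.degree]
    exact Finset.sum_subset (Finset.subset_univ _)
      (fun i _ h => Finsupp.notMem_support_iff.mp h)
  rw [this, Fin.sum_univ_three]

/-- equivalence between degree-`d` exponent vectors and `Tfin d` -/
noncomputable def homEquiv (d : ℕ) : {m : Fin 3 →₀ ℕ // m.degree = d} ≃ {x : ℕ × ℕ // x ∈ Tfin d} where
  toFun m := ⟨(m.1 0, m.1 1), by
    have := m.2; rw [degree_eq_sum] at this
    simp only [Tfin, Finset.mem_filter, Finset.mem_product, Finset.mem_range]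
    omega⟩
  invFun x := ⟨Finsupp.equivFunOnFinite.symm ![x.1.1, x.1.2, d - x.1.1 - x.1.2], by
    have hx := x.2
    simp only [Tfin, Finset.mem_filter, Finset.mem_product, Finset.mem_range] at hx
    rw [degree_eq_sum]
    simp only [Finsupp.equivFunOnFinite_symm_apply_apply]
    simp only [Matrix.cons_val_zero, Matrix.cons_val_one, Matrix.head_cons,
      Matrix.cons_val_two, Matrix.tail_cons]
    omega⟩
  left_inv m := by
    obtain ⟨m, hm⟩ := m
    rw [degree_eq_sum] at hm
    ext i
    fin_cases i <;>
      simp [Finsupp.equivFunOnFinite_symm_apply_apply] <;> omega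
  right_inv x := by
    ext <;> simp

noncomputable instance homFintype (d : ℕ) : Fintype {m : Fin 3 →₀ ℕ // m.degree = d} :=
  Fintype.ofEquiv _ (homEquiv d).symm

lemma homCard (d : ℕ) : 2 * Fintype.card {m : Fin 3 →₀ ℕ // m.degree = d} = (d+1)*(d+2) := by
  rw [Fintype.card_congr (homEquiv d), Fintype.card_coe, Tfin_card]

variable {k : Type} [Field k]

lemma homSub_eq (d : ℕ) :
    homogeneousSubmodule (Fin 3) k d = restrictSupport k {m | m.degree = d} := by
  rw [homogeneousSubmodule_eq_finsupp_supported]; rfl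

/-- a basis of the degree-`d` homogeneous part -/
noncomputable def homBasis (d : ℕ) :
    Module.Basis {m : Fin 3 →₀ ℕ // m.degree = d} k (homogeneousSubmodule (Fin 3) k d) :=
  (basisRestrictSupport k {m | m.degree = d}).map (LinearEquiv.ofEq _ _ (homSub_eq d).symm)

instance homFD (d : ℕ) : FiniteDimensional k (homogeneousSubmodule (Fin 3) k d) :=
  Module.Finite.of_basis (homBasis d)

lemma two_finrank (d : ℕ) :
    2 * Module.finrank k (homogeneousSubmodule (Fin 3) k d) = (d+1)*(d+2) := by
  rw [Module.finrank_eq_card_basis (homBasis (k := k) d), homCard]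

lemma aeval_line {h : MvPolynomial (Fin 3) k} {d : ℕ} (hh : h.IsHomogeneous d)
    (c : Fin 3 → k) (j : Fin 3) :
    aeval (fun m => C (c m) * X j) h = C (eval c h) * X j ^ d := by
  conv_lhs => rw [h.as_sum]
  conv_rhs => rw [h.as_sum]
  rw [map_sum]
  conv_rhs => rw [map_sum, map_sum, Finset.sum_mul]
  refine Finset.sum_congr rfl fun v hv => ?_
  have hvdeg : v.degree = d := by
    have := hh (MvPolynomial.mem_support_iff.mp hv)
    simpa [Finsupp.degree_eq_weight_one (R := ℕ), Pi.one_def] using this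
  rw [aeval_monomial, eval_monomial]
  have h1 : (v.prod fun i e => ((C (c i) : MvPolynomial (Fin 3) k) * X j) ^ e)
      = (v.prod fun i e => (C (c i) : MvPolynomial (Fin 3) k) ^ e)
        * (v.prod fun i e => (X j : MvPolynomial (Fin 3) k) ^ e) := by
    rw [Finsupp.prod, Finsupp.prod, Finsupp.prod, ← Finset.prod_mul_distrib]
    exact Finset.prod_congr rfl fun i _ => mul_pow _ _ _
  rw [h1]
  have hvdeg' : ∑ i ∈ v.support, v i = d := hvdeg
  have h2 : (v.prod fun i e => (X j : MvPolynomial (Fin 3) k) ^ e) = X j ^ d := by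
    rw [Finsupp.prod, Finset.prod_pow_eq_pow_sum, hvdeg']
  have h3 : (C (v.prod fun i e => (c i) ^ e) : MvPolynomial (Fin 3) k)
      = (v.prod fun i e => (C (c i) : MvPolynomial (Fin 3) k) ^ e) := by
    rw [Finsupp.prod, Finsupp.prod, map_prod]
    exact Finset.prod_congr rfl fun i _ => map_pow C _ _
  rw [h2, ← h3, map_mul, algebraMap_eq]
  ring

lemma eval_smul_homog {h : MvPolynomial (Fin 3) k} {d : ℕ} (hh : h.IsHomogeneous d)
    (r : k) (p : Fin 3 → k) :
    eval (fun m => r * p m) h = r ^ d * eval p h := by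
  conv_lhs => rw [h.as_sum]
  conv_rhs => rw [h.as_sum]
  rw [map_sum, map_sum, Finset.mul_sum]
  refine Finset.sum_congr rfl fun v hv => ?_
  have hvdeg : v.degree = d := by
    have := hh (MvPolynomial.mem_support_iff.mp hv)
    simpa [Finsupp.degree_eq_weight_one (R := ℕ), Pi.one_def] using this
  rw [eval_monomial, eval_monomial]
  have h1 : (v.prod fun i e => (r * p i) ^ e)
      = (v.prod fun i e => r ^ e) * (v.prod fun i e => (p i) ^ e) := by
    rw [Finsupp.prod, Finsupp.prod, Finsupp.prod, ← Finset.prod_mul_distrib]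
    exact Finset.prod_congr rfl fun i _ => mul_pow _ _ _
  have hvdeg' : ∑ i ∈ v.support, v i = d := hvdeg
  have h2 : (v.prod fun i e => r ^ e) = r ^ d := by
    rw [Finsupp.prod, Finset.prod_pow_eq_pow_sum, hvdeg']
  rw [h1, h2]
  ring

lemma mem_pointIdeal_of_homog {p : Fin 3 → k} (hp : p ≠ 0) {h : MvPolynomial (Fin 3) k}
    {d : ℕ} (hh : h.IsHomogeneous d) (hv : eval p h = 0) : h ∈ pointIdeal p := by
  obtain ⟨j, hj⟩ := Function.ne_iff.mp hp
  simp only [Pi.zero_apply] at hj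
  set c : Fin 3 → k := fun m => (p j)⁻¹ * p m with hc
  set g : Fin 3 → MvPolynomial (Fin 3) k := fun m => C (c m) * X j with hg
  have hgen : ∀ m, X m - g m ∈ pointIdeal p := by
    intro m
    apply Ideal.subset_span
    refine ⟨?_, ?_⟩
    · exact (isHomogeneous_X k m).sub (isHomogeneous_C_mul_X (c m) j)
    · simp only [map_sub, eval_X, map_mul, eval_C, hg, hc]
      field_simp
      simp
  have key : ∀ f : MvPolynomial (Fin 3) k, f - aeval g f ∈ pointIdeal p := by
    intro f
    induction f using MvPolynomial.induction_on with
    | C r => simp only [aeval_C, algebraMap_eq, sub_self]; exact zero_mem _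
    | add f q hf hq =>
        have : f + q - aeval g (f + q) = (f - aeval g f) + (q - aeval g q) := by
          rw [map_add]; ring
        rw [this]; exact add_mem hf hq
    | mul_X f m hf =>
        have : f * X m - aeval g (f * X m)
            = (f - aeval g f) * X m + aeval g f * (X m - g m) := by
          rw [map_mul, aeval_X]; ring
        rw [this]
        exact add_mem (Ideal.mul_mem_right _ _ hf) (Ideal.mul_mem_left _ _ (hgen m))
  have hzero : aeval g h = 0 := by
    rw [aeval_line hh c j]
    have : eval c h = 0 := by
      rw [hc]
      show eval (fun m => (p j)⁻¹ * p m) h = 0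
      rw [eval_smul_homog hh, hv, mul_zero]
    rw [this, map_zero, zero_mul]
  have := key h
  rwa [hzero, sub_zero] at this

lemma comp_mul {F : MvPolynomial (Fin 3) k} {a : ℕ} (hF : F.IsHomogeneous a)
    (A : MvPolynomial (Fin 3) k) (d : ℕ) :
    homogeneousComponent d (F * A)
      = F * (if a ≤ d then homogeneousComponent (d - a) A else 0) := by
  conv_lhs => rw [← sum_homogeneousComponent A, Finset.mul_sum, map_sum]
  have hterm : ∀ j ∈ Finset.range (A.totalDegree + 1),
      homogeneousComponent d (F * homogeneousComponent j A)
        = if j = d - a ∧ a ≤ d then F * homogeneousComponent j A else 0 := by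
    intro j _
    rw [homogeneousComponent_of_mem
      ((mem_homogeneousSubmodule _ _).mpr (hF.mul (homogeneousComponent_isHomogeneous j A)))]
    by_cases h1 : d = a + j
    · rw [if_pos h1, if_pos ⟨by omega, by omega⟩]
    · rw [if_neg h1, if_neg (by omega)]
  rw [Finset.sum_congr rfl hterm]
  by_cases had : a ≤ d
  · simp only [had, and_true]
    rw [Finset.sum_ite_eq' (Finset.range (A.totalDegree + 1)) (d - a)
      (fun j => F * homogeneousComponent j A)]
    by_cases hin : d - a ∈ Finset.range (A.totalDegree + 1)
    · rw [if_pos hin, if_pos trivial]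
    · rw [if_neg hin, if_pos trivial]
      rw [homogeneousComponent_eq_zero _ A (by
        simp only [Finset.mem_range] at hin; omega), mul_zero]
  · simp only [had, and_false, if_false, Finset.sum_const_zero, mul_zero]

/-- multiplication by a homogeneous form as a linear map between graded pieces -/
noncomputable def mulLM (F : MvPolynomial (Fin 3) k) {a : ℕ} (hF : F.IsHomogeneous a)
    (e d : ℕ) (hd : a + e = d) :
    (homogeneousSubmodule (Fin 3) k e) →ₗ[k] (homogeneousSubmodule (Fin 3) k d) where
  toFun q := ⟨F * q.1, (mem_homogeneousSubmodule _ _).mpr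
    (hd ▸ hF.mul ((mem_homogeneousSubmodule _ _).mp q.2))⟩
  map_add' q r := Subtype.ext (mul_add _ _ _)
  map_smul' c q := Subtype.ext (by simp [Algebra.mul_smul_comm])

lemma mulLM_inj {F : MvPolynomial (Fin 3) k} {a : ℕ} (hF : F.IsHomogeneous a)
    (hF0 : F ≠ 0) (e d : ℕ) (hd : a + e = d) :
    Function.Injective (mulLM F hF e d hd) := by
  intro q r h
  have : F * q.1 = F * r.1 := congrArg Subtype.val h
  exact Subtype.ext (mul_left_cancel₀ hF0 this)

lemma mem_range_mulLM {F : MvPolynomial (Fin 3) k} {a : ℕ} {hF : F.IsHomogeneous a}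
    {e d : ℕ} {hd : a + e = d} (x : homogeneousSubmodule (Fin 3) k d) :
    x ∈ LinearMap.range (mulLM F hF e d hd)
      ↔ ∃ q : MvPolynomial (Fin 3) k, q.IsHomogeneous e ∧ (x : MvPolynomial (Fin 3) k) = F * q := by
  constructor
  · rintro ⟨q, rfl⟩
    exact ⟨q.1, (mem_homogeneousSubmodule _ _).mp q.2, rfl⟩
  · rintro ⟨q, hq, hx⟩
    exact ⟨⟨q, (mem_homogeneousSubmodule _ _).mpr hq⟩, Subtype.ext hx.symm⟩

/-- degree-`d` piece of an ideal -/
noncomputable def piece (I : Ideal (MvPolynomial (Fin 3) k)) (d : ℕ) :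
    Submodule k (homogeneousSubmodule (Fin 3) k d) :=
  Submodule.comap (homogeneousSubmodule (Fin 3) k d).subtype (Submodule.restrictScalars k I)

lemma mem_piece_iff {I : Ideal (MvPolynomial (Fin 3) k)} {d : ℕ}
    (x : homogeneousSubmodule (Fin 3) k d) :
    x ∈ piece I d ↔ (x : MvPolynomial (Fin 3) k) ∈ I := Iff.rfl

lemma range_le_piece {F : MvPolynomial (Fin 3) k} {a : ℕ} {hF : F.IsHomogeneous a}
    {e d : ℕ} {hd : a + e = d} {I : Ideal (MvPolynomial (Fin 3) k)} (hFI : F ∈ I) :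
    LinearMap.range (mulLM F hF e d hd) ≤ piece I d := by
  rintro x ⟨q, rfl⟩
  exact Ideal.mul_mem_right _ _ hFI

section Span
variable {t : ℕ} {F G : MvPolynomial (Fin 3) k}

lemma span_decomp (hF : F.IsHomogeneous 3) (hG : G.IsHomogeneous t)
    {d : ℕ} {x : MvPolynomial (Fin 3) k} (hxh : x.IsHomogeneous d)
    (hmem : x ∈ Ideal.span {F, G}) :
    ∃ u v : MvPolynomial (Fin 3) k, u.IsHomogeneous (d - 3) ∧ v.IsHomogeneous (d - t) ∧
      (d < 3 → u = 0) ∧ (d < t → v = 0) ∧ x = F * u + G * v := by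
  obtain ⟨A, B, hAB⟩ := Ideal.mem_span_pair.mp hmem
  have hx : homogeneousComponent d x = x := by
    rw [homogeneousComponent_of_mem ((mem_homogeneousSubmodule _ _).mpr hxh), if_pos rfl]
  have hsplit : x = homogeneousComponent d (F * A) + homogeneousComponent d (G * B) := by
    rw [← map_add, show F * A + G * B = x by rw [← hAB]; ring, hx]
  rw [comp_mul hF, comp_mul hG] at hsplit
  refine ⟨_, _, ?_, ?_, ?_, ?_, hsplit⟩
  · split_ifs with h
    · exact homogeneousComponent_isHomogeneous _ _
    · exact isHomogeneous_zero _ _ _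
  · split_ifs with h
    · exact homogeneousComponent_isHomogeneous _ _
    · exact isHomogeneous_zero _ _ _
  · intro h; rw [if_neg (by omega)]
  · intro h; rw [if_neg (by omega)]

lemma piece_span_lt3 (hF : F.IsHomogeneous 3) (hG : G.IsHomogeneous t) (ht3 : 3 ≤ t)
    {d : ℕ} (hd : d < 3) : piece (Ideal.span {F, G}) d = ⊥ := by
  rw [eq_bot_iff]
  intro x hx
  obtain ⟨u, v, -, -, hu0, hv0, hx⟩ := span_decomp hF hG
    ((mem_homogeneousSubmodule _ _).mp x.2) hx
  rw [hu0 hd, hv0 (by omega), mul_zero, mul_zero, add_zero] at hx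
  exact Submodule.mem_bot _ |>.mpr (Subtype.ext hx)

lemma piece_span_mid (hF : F.IsHomogeneous 3) (hG : G.IsHomogeneous t)
    {d e : ℕ} (he : 3 + e = d) (hdt : d < t) :
    piece (Ideal.span {F, G}) d = LinearMap.range (mulLM F hF e d he) := by
  apply le_antisymm
  · intro x hx
    obtain ⟨u, v, hu, -, -, hv0, hx⟩ := span_decomp hF hG
      ((mem_homogeneousSubmodule _ _).mp x.2) hx
    rw [hv0 hdt, mul_zero, add_zero] at hx
    exact (mem_range_mulLM x).mpr ⟨u, by convert hu using 2; omega, hx⟩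
  · exact range_le_piece (Ideal.subset_span (by simp))

lemma piece_span_big (hF : F.IsHomogeneous 3) (hG : G.IsHomogeneous t)
    {d e₁ e₂ : ℕ} (h1 : 3 + e₁ = d) (h2 : t + e₂ = d) :
    piece (Ideal.span {F, G}) d
      = LinearMap.range (mulLM F hF e₁ d h1) ⊔ LinearMap.range (mulLM G hG e₂ d h2) := by
  apply le_antisymm
  · intro x hx
    obtain ⟨u, v, hu, hv, -, -, hx⟩ := span_decomp hF hG
      ((mem_homogeneousSubmodule _ _).mp x.2) hx
    have hFu : F * u ∈ homogeneousSubmodule (Fin 3) k d := by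
      rw [mem_homogeneousSubmodule]
      have : u.IsHomogeneous e₁ := by convert hu using 1; omega
      exact h1 ▸ hF.mul this
    have hGv : G * v ∈ homogeneousSubmodule (Fin 3) k d := by
      rw [mem_homogeneousSubmodule]
      have : v.IsHomogeneous e₂ := by convert hv using 1; omega
      exact h2 ▸ hG.mul this
    have : x = (⟨F * u, hFu⟩ : homogeneousSubmodule (Fin 3) k d) + ⟨G * v, hGv⟩ :=
      Subtype.ext hx
    rw [this]
    exact Submodule.add_mem_sup
      ((mem_range_mulLM _).mpr ⟨u, by convert hu using 2; omega, rfl⟩)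
      ((mem_range_mulLM _).mpr ⟨v, by convert hv using 2; omega, rfl⟩)
  · refine sup_le (range_le_piece (Ideal.subset_span (by simp)))
      (range_le_piece (Ideal.subset_span (by simp)))

lemma inf_small (hF : F.IsHomogeneous 3) (hG : G.IsHomogeneous t)
    (hFp : Prime F) (hFG : ¬ F ∣ G)
    {d e₁ e₂ : ℕ} (h1 : 3 + e₁ = d) (h2 : t + e₂ = d) (hsm : e₂ < 3) :
    LinearMap.range (mulLM F hF e₁ d h1) ⊓ LinearMap.range (mulLM G hG e₂ d h2) = ⊥ := by
  rw [eq_bot_iff]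
  rintro x ⟨hx1, hx2⟩
  obtain ⟨u, hu, hxu⟩ := (mem_range_mulLM x).mp hx1
  obtain ⟨v, hv, hxv⟩ := (mem_range_mulLM x).mp hx2
  have hdvd : F ∣ G * v := ⟨u, by rw [← hxu, hxv]⟩
  have hFv : F ∣ v := ((hFp.dvd_mul).mp hdvd).resolve_left hFG
  obtain ⟨w, rfl⟩ := hFv
  have hv0 : F * w = 0 := by
    have : homogeneousComponent e₂ (F * w) = F * w := by
      rw [homogeneousComponent_of_mem ((mem_homogeneousSubmodule _ _).mpr hv), if_pos rfl]
    rw [comp_mul hF, if_neg (by omega), mul_zero] at this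
    exact this.symm
  rw [hv0, mul_zero] at hxv
  exact Submodule.mem_bot _ |>.mpr (Subtype.ext hxv)

lemma inf_big (hF : F.IsHomogeneous 3) (hG : G.IsHomogeneous t)
    (hFp : Prime F) (hFndvd : ¬ F ∣ G)
    {d e₁ e₂ e₃ : ℕ} (h1 : 3 + e₁ = d) (h2 : t + e₂ = d) (h3 : (3 + t) + e₃ = d) :
    LinearMap.range (mulLM F hF e₁ d h1) ⊓ LinearMap.range (mulLM G hG e₂ d h2)
      = LinearMap.range (mulLM (F * G) (hF.mul hG) e₃ d h3) := by
  apply le_antisymm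
  · rintro x ⟨hx1, hx2⟩
    obtain ⟨u, hu, hxu⟩ := (mem_range_mulLM x).mp hx1
    obtain ⟨v, hv, hxv⟩ := (mem_range_mulLM x).mp hx2
    have hdvd : F ∣ G * v := ⟨u, by rw [← hxu, hxv]⟩
    have hFv : F ∣ v := ((hFp.dvd_mul).mp hdvd).resolve_left hFndvd
    obtain ⟨w, rfl⟩ := hFv
    have hv' : F * w = F * homogeneousComponent (e₂ - 3) w := by
      have : homogeneousComponent e₂ (F * w) = F * w := by
        rw [homogeneousComponent_of_mem ((mem_homogeneousSubmodule _ _).mpr hv), if_pos rfl]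
      rw [comp_mul hF, if_pos (by omega)] at this
      exact this.symm
    refine (mem_range_mulLM x).mpr ⟨homogeneousComponent (e₂ - 3) w, ?_, ?_⟩
    · have := homogeneousComponent_isHomogeneous (e₂ - 3) w
      convert this using 1; omega
    · rw [hxv, hv']; ring
  · rintro x ⟨w, rfl⟩
    constructor
    · refine (mem_range_mulLM _).mpr ⟨G * w.1, ?_, by show F * G * w.1 = _; ring⟩
      have : (G * w.1).IsHomogeneous (t + e₃) :=
        hG.mul ((mem_homogeneousSubmodule _ _).mp w.2)
      convert this using 1; omega
    · refine (mem_range_mulLM _).mpr ⟨F * w.1, ?_, by show F * G * w.1 = _; ring⟩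
      have : (F * w.1).IsHomogeneous (3 + e₃) :=
        hF.mul ((mem_homogeneousSubmodule _ _).mp w.2)
      convert this using 1; omega

end Span

lemma hilbert_add (I : Ideal (MvPolynomial (Fin 3) k)) (d : ℕ) :
    hilbertFn I d + Module.finrank k (piece I d)
      = Module.finrank k (homogeneousSubmodule (Fin 3) k d) :=
  Submodule.finrank_quotient_add_finrank _

lemma finrank_range_mulLM {F : MvPolynomial (Fin 3) k} {a : ℕ} (hF : F.IsHomogeneous a)
    (hF0 : F ≠ 0) (e d : ℕ) (hd : a + e = d) :
    Module.finrank k (LinearMap.range (mulLM F hF e d hd))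
      = Module.finrank k (homogeneousSubmodule (Fin 3) k e) :=
  LinearMap.finrank_range_of_inj (mulLM_inj hF hF0 e d hd)

lemma N_step (e : ℕ) :
    Module.finrank k (homogeneousSubmodule (Fin 3) k (e + 3))
      = Module.finrank k (homogeneousSubmodule (Fin 3) k e) + (3 * e + 9) := by
  have h1 := two_finrank (k := k) e
  have h2 := two_finrank (k := k) (e + 3)
  have h3 : (e + 3 + 1) * (e + 3 + 2) = (e + 1) * (e + 2) + (6 * e + 18) := by ring
  omega

end Stmt7Aux

open Stmt7Aux in
/-- a reduced set `X` of `n = 3t` points (`t ≥ 3`) on an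
irreducible cubic `C = V(F)` whose Hilbert function has first difference
`(1,2,3,…,3,2,1)` (i.e. `h(0)=1`, `h(i)=3i` for `1 ≤ i ≤ t-1`, `h(t)=3t-1`,
`h(i)=3t` for `i ≥ t+1`) is a complete intersection `I(X) = (F, G)` with
`deg G = t`. -/
theorem stmt7 {k : Type} [Field k] [IsAlgClosed k] (t : ℕ) (ht : 3 ≤ t)
    (F : MvPolynomial (Fin 3) k)
    (hF : F.IsHomogeneous 3) (hirr : Irreducible F)
    (s : Fin (3 * t) → (Fin 3 → k))
    (hne : ∀ i, s i ≠ 0)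
    (hdist : ∀ i j, i ≠ j → ∀ c : k, c • s j ≠ s i)
    (honC : ∀ i, MvPolynomial.eval (s i) F = 0)
    (hh0 : hilbertFn (⨅ i, pointIdeal (s i)) 0 = 1)
    (hhmid : ∀ i, 1 ≤ i → i ≤ t - 1 → hilbertFn (⨅ i', pointIdeal (s i')) i = 3 * i)
    (hht : hilbertFn (⨅ i, pointIdeal (s i)) t = 3 * t - 1)
    (hhend : ∀ i, t + 1 ≤ i → hilbertFn (⨅ i', pointIdeal (s i')) i = 3 * t) :
    ∃ G : MvPolynomial (Fin 3) k, G.IsHomogeneous t ∧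
      (⨅ i, pointIdeal (s i)) = Ideal.span {F, G} := by
  set I : Ideal (MvPolynomial (Fin 3) k) := ⨅ i, pointIdeal (s i) with hIdef
  have hFne : F ≠ 0 := hirr.ne_zero
  have hFp : Prime F := UniqueFactorizationMonoid.irreducible_iff_prime.mp hirr
  have hFI : F ∈ I := Ideal.mem_iInf.mpr fun i => mem_pointIdeal_of_homog (hne i) hF (honC i)
  -- construct G
  obtain ⟨e0, he0⟩ : ∃ e, 3 + e = t := ⟨t - 3, by omega⟩
  set M := LinearMap.range (mulLM F hF e0 t he0) with hMdef
  have hMle : M ≤ piece I t := range_le_piece hFI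
  have hMrank : Module.finrank k M = Module.finrank k (homogeneousSubmodule (Fin 3) k e0) :=
    finrank_range_mulLM hF hFne e0 t he0
  have hItrank : Module.finrank k (piece I t)
      = Module.finrank k (homogeneousSubmodule (Fin 3) k e0) + 1 := by
    have h1 := hilbert_add I t
    rw [hht] at h1
    have hstep := N_step (k := k) e0
    rw [show e0 + 3 = t by omega] at hstep
    omega
  have hlt : M < piece I t := lt_of_le_of_ne hMle (fun h => by rw [h, hItrank] at hMrank; omega)
  obtain ⟨x₀, hx₀I, hx₀M⟩ := SetLike.exists_of_lt hlt
  set G : MvPolynomial (Fin 3) k := (x₀ : MvPolynomial (Fin 3) k) with hGdef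
  have hGhom : G.IsHomogeneous t := (mem_homogeneousSubmodule _ _).mp x₀.2
  have hGI : G ∈ I := hx₀I
  have hFndvd : ¬ F ∣ G := by
    rintro ⟨q, hq⟩
    apply hx₀M
    rw [hMdef]
    refine (mem_range_mulLM x₀).mpr ⟨homogeneousComponent e0 q, ?_, ?_⟩
    · exact homogeneousComponent_isHomogeneous e0 q
    · have hcomp : homogeneousComponent t G = G := by
        rw [homogeneousComponent_of_mem x₀.2, if_pos rfl]
      show G = F * homogeneousComponent e0 q
      conv_lhs => rw [← hcomp, hq]
      rw [comp_mul hF, if_pos (by omega), show t - 3 = e0 by omega]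
  have hG0 : G ≠ 0 := by
    intro h
    exact hx₀M (by rw [hMdef]; exact (show x₀ = 0 from Subtype.ext h) ▸ zero_mem M)
  set J : Ideal (MvPolynomial (Fin 3) k) := Ideal.span {F, G} with hJdef
  have hJle : J ≤ I := by
    rw [hJdef, Ideal.span_le]
    rintro f hf
    rcases hf with rfl | rfl
    · exact hFI
    · exact hGI
  -- per-degree equality
  have hkey : ∀ d, piece I d = piece J d := by
    intro d
    have hJI : piece J d ≤ piece I d := fun x hx => hJle hx
    rcases lt_or_ge d 3 with hd3 | hd3
    · have hJd : piece J d = ⊥ := piece_span_lt3 hF hGhom ht hd3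
      have h1 := hilbert_add I d
      have hNval : hilbertFn I d = Module.finrank k (homogeneousSubmodule (Fin 3) k d) := by
        interval_cases d
        · rw [hh0]; have := two_finrank (k := k) 0; omega
        · rw [hhmid 1 (by omega) (by omega)]; have := two_finrank (k := k) 1; omega
        · rw [hhmid 2 (by omega) (by omega)]; have := two_finrank (k := k) 2; omega
      rw [hJd]
      exact Submodule.finrank_eq_zero.mp (by omega)
    rcases lt_or_ge d t with hdt | hdt
    · obtain ⟨e, he⟩ : ∃ e, 3 + e = d := ⟨d - 3, by omega⟩
      have hJd := piece_span_mid (G := G) hF hGhom he hdt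
      have hJrank : Module.finrank k (piece J d)
          = Module.finrank k (homogeneousSubmodule (Fin 3) k e) := by
        rw [hJd]; exact finrank_range_mulLM hF hFne e d he
      have h1 := hilbert_add I d
      rw [hhmid d (by omega) (by omega)] at h1
      have hstep := N_step (k := k) e
      rw [show e + 3 = d by omega] at hstep
      exact (Submodule.eq_of_le_of_finrank_le hJI (by omega)).symm
    · obtain ⟨e1, he1⟩ : ∃ e, 3 + e = d := ⟨d - 3, by omega⟩
      obtain ⟨e2, he2⟩ : ∃ e, t + e = d := ⟨d - t, by omega⟩
      have hJd := piece_span_big hF hGhom he1 he2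
      have hr1 := finrank_range_mulLM hF hFne e1 d he1
      have hr2 := finrank_range_mulLM hGhom hG0 e2 d he2
      have hsup := Submodule.finrank_sup_add_finrank_inf_eq
        (LinearMap.range (mulLM F hF e1 d he1)) (LinearMap.range (mulLM G hGhom e2 d he2))
      have h1 := hilbert_add I d
      have hstep1 := N_step (k := k) e1
      rw [show e1 + 3 = d by omega] at hstep1
      rcases lt_or_ge d (t + 3) with hdsm | hdbg
      · have hinf := inf_small hF hGhom hFp hFndvd he1 he2 (by omega)
        rw [hinf, finrank_bot] at hsup
        have hJrank : Module.finrank k (piece J d)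
            = Module.finrank k (homogeneousSubmodule (Fin 3) k e1)
              + Module.finrank k (homogeneousSubmodule (Fin 3) k e2) := by
          rw [hJd]; omega
        have hNe2 : 2 * Module.finrank k (homogeneousSubmodule (Fin 3) k e2)
            = (e2 + 1) * (e2 + 2) := two_finrank e2
        rcases eq_or_lt_of_le hdt with hdeq | hdgt
        · have hhd : hilbertFn I d = 3 * t - 1 := by rw [← hdeq]; exact hht
          rw [hhd] at h1
          have he20 : e2 = 0 := by omega
          rw [he20] at hNe2 hJrank
          exact (Submodule.eq_of_le_of_finrank_le hJI (by omega)).symm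
        · rw [hhend d (by omega)] at h1
          have he212 : e2 = 1 ∨ e2 = 2 := by omega
          rcases he212 with h | h <;> rw [h] at hNe2 hJrank <;>
            exact (Submodule.eq_of_le_of_finrank_le hJI (by omega)).symm
      · obtain ⟨e3, he3⟩ : ∃ e, (3 + t) + e = d := ⟨d - t - 3, by omega⟩
        have hinf := inf_big hF hGhom hFp hFndvd he1 he2 he3
        have hr3 := finrank_range_mulLM (hF.mul hGhom) (mul_ne_zero hFne hG0) e3 d he3
        rw [hinf, hr3, hr1, hr2] at hsup
        have hstep2 := N_step (k := k) e3
        rw [show e3 + 3 = e2 by omega] at hstep2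
        rw [hhend d (by omega)] at h1
        refine (Submodule.eq_of_le_of_finrank_le hJI ?_).symm
        rw [hJd]
        omega
  -- I is homogeneous
  have hIhom : Ideal.IsHomogeneous (homogeneousSubmodule (Fin 3) k) I := by
    rw [hIdef]
    apply Ideal.IsHomogeneous.iInf
    intro i
    apply Ideal.homogeneous_span
    rintro x ⟨hx1, -⟩
    exact ⟨1, hx1⟩
  refine ⟨G, hGhom, ?_⟩
  apply le_antisymm _ hJle
  intro f hf
  have hcomp : ∀ j, homogeneousComponent j f ∈ J := by
    intro j
    have hdec := hIhom j hf
    have hdeq : ((DirectSum.decompose (homogeneousSubmodule (Fin 3) k) f j :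
        homogeneousSubmodule (Fin 3) k j) : MvPolynomial (Fin 3) k)
        = homogeneousComponent j f := decomposition.decompose'_apply f j
    rw [hdeq] at hdec
    have hx : (⟨homogeneousComponent j f, homogeneousComponent_mem j f⟩ :
        homogeneousSubmodule (Fin 3) k j) ∈ piece I j := hdec
    rw [hkey j] at hx
    exact hx
  have hfs := sum_homogeneousComponent f
  rw [← hfs]
  exact Ideal.sum_mem _ fun j _ => hcomp j
end
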